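/- arXiv:2507.20422 — 3 statements merged into one kernel-verified Lean document; each statement's English description precedes it below -/
import Mathlib

section
/- Chain-insertion fidelity invariance (Property 1). Let a, b, k be positive natural numbers. Let V_{p1}, V_{q1} be unitary a×a complex matrices, V_α, V_β unitary 2×2 complex matrices, and V_{p2}, V_{q2} unitary b×b complex matrices. On the unextended register (index type Fin a × Fin 2 × Fin 2 × Fin b) let W_{αβ}, W_P', W_Q' be unitary matrices, and set U_P = W_{αβ}·W_P'·(V_{p1} ⊗ₖ V_α ⊗ₖ V_β ⊗ₖ V_{p2}) and U_Q = W_{αβ}·W_Q'·(V_{q1} ⊗ₖ V_α ⊗ₖ V_β ⊗ₖ V_{q2}). On the extended register (index type Fin a × Fin 2 × Fin k × Fin 2 × Fin b) let C be any unitary matrix, let ι denote the embedding that sends a matrix M on the unextended register to the matrix on the extended register acting as M on the a, 2, 2, b factors and as the identity I_k on the inserted middle factor (i.e. the reindexing of M ⊗ₖ I_k that places the identity factor between the two 2-dimensional factors), and set Ũ_P = C · ι(W_P') · (V_{p1} ⊗ₖ V_α ⊗ₖ I_k ⊗ₖ V_β ⊗ₖ V_{p2}) and Ũ_Q = C ·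 ι(W_Q') · (V_{q1} ⊗ₖ V_α ⊗ₖ I_k ⊗ₖ V_β ⊗ₖ V_{q2}). Then f(Ũ_Q^† · Ũ_P) = f(U_Q^† · U_P), i.e. the quantum fidelity between the extended encoded states equals the quantum fidelity between the unextended encoded states. -/
open Matrix
open scoped Kronecker

/-- Fiducial fidelity entry: the squared modulus of the matrix entry at the
all-zeros row and column index. -/
noncomputable def fid {ι : Type*} [Zero ι] (M : Matrix ι ι ℂ) : ℝ :=
  ‖M 0 0‖ ^ 2

/-- Embedding of a matrix on the unextended register `Fin a × Fin 2 × Fin 2 × Fin b`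
into the extended register `Fin a × Fin 2 × Fin k × Fin 2 × Fin b`, acting as the
matrix on the `a, 2, 2, b` factors and as the identity on the inserted `Fin k`
factor (the reindexing of `M ⊗ₖ I_k` placing the identity factor in the middle). -/
def insertId (a k b : ℕ)
    (M : Matrix (Fin a × Fin 2 × Fin 2 × Fin b) (Fin a × Fin 2 × Fin 2 × Fin b) ℂ) :
    Matrix (Fin a × Fin 2 × Fin k × Fin 2 × Fin b)
      (Fin a × Fin 2 × Fin k × Fin 2 × Fin b) ℂ :=
  fun p q =>
    (if p.2.2.1 = q.2.2.1 then (1 : ℂ) else 0) *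
      M (p.1, p.2.1, p.2.2.2.1, p.2.2.2.2) (q.1, q.2.1, q.2.2.2.1, q.2.2.2.2)


section Aux
variable {a k b : ℕ}

lemma insertId_conjTranspose (M : Matrix (Fin a × Fin 2 × Fin 2 × Fin b) (Fin a × Fin 2 × Fin 2 × Fin b) ℂ) :
    (insertId a k b M)ᴴ = insertId a k b Mᴴ := by
  ext p q
  simp only [insertId, conjTranspose_apply, star_mul', apply_ite star, star_one, star_zero]
  exact congrArg₂ (· * ·) (if_congr eq_comm rfl rfl) rfl

lemma insertId_mul (M N : Matrix (Fin a × Fin 2 × Fin 2 × Fin b) (Fin a × Fin 2 × Fin 2 × Fin b) ℂ) :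
    insertId a k b M * insertId a k b N = insertId a k b (M * N) := by
  ext p q
  simp only [insertId, mul_apply, Fintype.sum_prod_type, ite_mul, mul_ite, one_mul, zero_mul,
    mul_zero, mul_one]
  rw [Finset.sum_comm]
  simp [Finset.sum_comm (s := Finset.univ (α := Fin 2)), Finset.mul_sum, mul_assoc]

lemma kron_insertId (A1 : Matrix (Fin a) (Fin a) ℂ) (A2 A3 : Matrix (Fin 2) (Fin 2) ℂ)
    (A4 : Matrix (Fin b) (Fin b) ℂ) :
    A1 ⊗ₖ (A2 ⊗ₖ ((1 : Matrix (Fin k) (Fin k) ℂ) ⊗ₖ (A3 ⊗ₖ A4))) =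
      insertId a k b (A1 ⊗ₖ (A2 ⊗ₖ (A3 ⊗ₖ A4))) := by
  ext p q
  simp only [insertId, kroneckerMap_apply, Matrix.one_apply]
  ring

end Aux

/-- **Chain-insertion fidelity invariance (Property 1).** -/
theorem chain_insertion_fidelity_invariance
    (a b k : ℕ) [NeZero a] [NeZero b] [NeZero k]
    (Vp1 Vq1 : Matrix (Fin a) (Fin a) ℂ)
    (hVp1 : Vp1 ∈ unitaryGroup (Fin a) ℂ) (hVq1 : Vq1 ∈ unitaryGroup (Fin a) ℂ)
    (Vα Vβ : Matrix (Fin 2) (Fin 2) ℂ)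
    (hVα : Vα ∈ unitaryGroup (Fin 2) ℂ) (hVβ : Vβ ∈ unitaryGroup (Fin 2) ℂ)
    (Vp2 Vq2 : Matrix (Fin b) (Fin b) ℂ)
    (hVp2 : Vp2 ∈ unitaryGroup (Fin b) ℂ) (hVq2 : Vq2 ∈ unitaryGroup (Fin b) ℂ)
    (Wαβ WP' WQ' :
      Matrix (Fin a × Fin 2 × Fin 2 × Fin b) (Fin a × Fin 2 × Fin 2 × Fin b) ℂ)
    (hWαβ : Wαβ ∈ unitaryGroup (Fin a × Fin 2 × Fin 2 × Fin b) ℂ)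
    (hWP' : WP' ∈ unitaryGroup (Fin a × Fin 2 × Fin 2 × Fin b) ℂ)
    (hWQ' : WQ' ∈ unitaryGroup (Fin a × Fin 2 × Fin 2 × Fin b) ℂ)
    (C : Matrix (Fin a × Fin 2 × Fin k × Fin 2 × Fin b)
      (Fin a × Fin 2 × Fin k × Fin 2 × Fin b) ℂ)
    (hC : C ∈ unitaryGroup (Fin a × Fin 2 × Fin k × Fin 2 × Fin b) ℂ)
    -- the unextended encoded unitaries
    (UP UQ : Matrix (Fin a × Fin 2 × Fin 2 × Fin b) (Fin a × Fin 2 × Fin 2 × Fin b) ℂ)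
    (hUP : UP = Wαβ * WP' * (Vp1 ⊗ₖ (Vα ⊗ₖ (Vβ ⊗ₖ Vp2))))
    (hUQ : UQ = Wαβ * WQ' * (Vq1 ⊗ₖ (Vα ⊗ₖ (Vβ ⊗ₖ Vq2))))
    -- the extended encoded unitaries
    (UPt UQt : Matrix (Fin a × Fin 2 × Fin k × Fin 2 × Fin b)
      (Fin a × Fin 2 × Fin k × Fin 2 × Fin b) ℂ)
    (hUPt : UPt = C * insertId a k b WP' *
      (Vp1 ⊗ₖ (Vα ⊗ₖ ((1 : Matrix (Fin k) (Fin k) ℂ) ⊗ₖ (Vβ ⊗ₖ Vp2)))))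
    (hUQt : UQt = C * insertId a k b WQ' *
      (Vq1 ⊗ₖ (Vα ⊗ₖ ((1 : Matrix (Fin k) (Fin k) ℂ) ⊗ₖ (Vβ ⊗ₖ Vq2))))) :
    fid (UQtᴴ * UPt) = fid (UQᴴ * UP) := by
  have hCc : Cᴴ * C = 1 := by
    simpa [Matrix.star_eq_conjTranspose] using hC.1
  have hWc : Wαβᴴ * Wαβ = 1 := by
    simpa [Matrix.star_eq_conjTranspose] using hWαβ.1
  have h1 : UQᴴ * UP =
      (Vq1 ⊗ₖ (Vα ⊗ₖ (Vβ ⊗ₖ Vq2)))ᴴ * ((WQ'ᴴ * WP') * (Vp1 ⊗ₖ (Vα ⊗ₖ (Vβ ⊗ₖ Vp2)))) := by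
    subst hUP hUQ
    simp only [conjTranspose_mul, Matrix.mul_assoc]
    rw [← Matrix.mul_assoc Wαβᴴ Wαβ, hWc, Matrix.one_mul]
  have h2 : UQtᴴ * UPt =
      insertId a k b ((Vq1 ⊗ₖ (Vα ⊗ₖ (Vβ ⊗ₖ Vq2)))ᴴ *
        ((WQ'ᴴ * WP') * (Vp1 ⊗ₖ (Vα ⊗ₖ (Vβ ⊗ₖ Vp2))))) := by
    subst hUPt hUQt
    rw [kron_insertId, kron_insertId]
    simp only [conjTranspose_mul, insertId_conjTranspose, Matrix.mul_assoc]
    rw [← Matrix.mul_assoc Cᴴ C, hCc, Matrix.one_mul]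
    simp only [insertId_mul, insertId_conjTranspose, conjTranspose_mul, Matrix.mul_assoc]
  rw [h1, h2]
  unfold fid
  congr 2
  simp [insertId]
  rfl
end

section
/- Chain contraction reduces qubit count (Corollary 1). Let N and N_C be natural numbers with N_C < N, and set m = 2^(N−N_C) and K = 2^(N_C). Let C be a unitary (m·K)×(m·K) complex matrix (indexed by Fin m × Fin K), and let M_P, M_Q be unitary m×m complex matrices. Suppose the N-qubit encoded unitaries of two molecular representations P̃ and Q̃ have the form Ũ_P = C · (M_P ⊗ₖ I_K) and Ũ_Q = C · (M_Q ⊗ₖ I_K), i.e. they share a common unitary C on the fragment qubits and their couplings, and otherwise act trivially on the N_C fragment qubits. Then the N-qubit fidelity F(P̃, Q̃) = f(Ũ_Q^† · Ũ_P) equals the fidelity f(M_Q^† · M_P) computed with only N − N_C qubits. -/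
open Matrix
open scoped Kronecker

/-- **Chain contraction reduces qubit count (Corollary 1).** The `N`-qubit fidelity
of two encoded molecules sharing common fragments on `N_C` qubits equals a fidelity
computed with only `N − N_C` qubits. -/
theorem chain_contraction_reduces_qubits
    (N NC : ℕ) (hNC : NC < N)
    (C : Matrix (Fin (2 ^ (N - NC)) × Fin (2 ^ NC))
      (Fin (2 ^ (N - NC)) × Fin (2 ^ NC)) ℂ)
    (hC : C ∈ unitaryGroup (Fin (2 ^ (N - NC)) × Fin (2 ^ NC)) ℂ)
    (MP MQ : Matrix (Fin (2 ^ (N - NC))) (Fin (2 ^ (N - NC))) ℂ)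
    (hMP : MP ∈ unitaryGroup (Fin (2 ^ (N - NC))) ℂ)
    (hMQ : MQ ∈ unitaryGroup (Fin (2 ^ (N - NC))) ℂ)
    (UPt UQt : Matrix (Fin (2 ^ (N - NC)) × Fin (2 ^ NC))
      (Fin (2 ^ (N - NC)) × Fin (2 ^ NC)) ℂ)
    (hUPt : UPt = C * (MP ⊗ₖ (1 : Matrix (Fin (2 ^ NC)) (Fin (2 ^ NC)) ℂ)))
    (hUQt : UQt = C * (MQ ⊗ₖ (1 : Matrix (Fin (2 ^ NC)) (Fin (2 ^ NC)) ℂ))) :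
    fid (UQtᴴ * UPt) = fid (MQᴴ * MP) := by
  have hCC : Cᴴ * C = 1 := hC.1
  have hconj : (MQ ⊗ₖ (1 : Matrix (Fin (2 ^ NC)) (Fin (2 ^ NC)) ℂ))ᴴ
      = MQᴴ ⊗ₖ (1 : Matrix (Fin (2 ^ NC)) (Fin (2 ^ NC)) ℂ) := by
    ext ⟨i, k⟩ ⟨j, l⟩
    simp [conjTranspose_apply, Matrix.one_apply, apply_ite]
    split <;> simp_all [eq_comm]
  have key : UQtᴴ * UPt = (MQᴴ * MP) ⊗ₖ (1 : Matrix (Fin (2 ^ NC)) (Fin (2 ^ NC)) ℂ) := by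
    rw [hUPt, hUQt, conjTranspose_mul, mul_assoc, ← mul_assoc Cᴴ, hCC, one_mul, hconj,
      ← Matrix.mul_kronecker_mul, one_mul]
  rw [key]
  simp [fid, Matrix.kroneckerMap_apply]
end

section
/- Two-qubit rotation gates built from the same Pauli commute. Fix a 2×2 complex matrix P and a natural number n. For distinct indices i, j ∈ Fin n, define P_{ij} as the iterated Kronecker product over m ∈ Fin n of A_m, where A_m = P if m = i or m = j, and A_m = I₂ otherwise, and for a real angle θ define the rotation gate R_{ij}(θ) = exp(−(i·θ/2) · P_{ij}), the matrix exponential of the scaled coupling operator. Then for any two pairs of distinct indices (i, j) and (k, l) in Fin n and any real angles θ, φ, the gates commute: R_{ij}(θ) · R_{kl}(φ) = R_{kl}(φ) · R_{ij}(θ). -/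
open Matrix

/-- The `n`-qubit coupling operator `P_{ij}`: the iterated Kronecker product over
`m : Fin n` of the matrix `A m`, where `A m = P` if `m = i` or `m = j`, and
`A m = I₂` otherwise. -/
def coupling (n : ℕ) (P : Matrix (Fin 2) (Fin 2) ℂ) (i j : Fin n) :
    Matrix (Fin n → Fin 2) (Fin n → Fin 2) ℂ :=
  fun x y =>
    ∏ m, (if m = i ∨ m = j then P else (1 : Matrix (Fin 2) (Fin 2) ℂ)) (x m) (y m)

/-- The two-qubit rotation gate `R_{ij}(θ) = exp(−(i·θ/2) · P_{ij})`, the matrix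
exponential of the scaled coupling operator. -/
noncomputable def rotGate (n : ℕ) (P : Matrix (Fin 2) (Fin 2) ℂ) (i j : Fin n)
    (θ : ℝ) : Matrix (Fin n → Fin 2) (Fin n → Fin 2) ℂ :=
  NormedSpace.exp ((-(Complex.I * θ / 2)) • coupling n P i j)

lemma prodMat_mul (n : ℕ) (M N : Fin n → Matrix (Fin 2) (Fin 2) ℂ) :
    (Matrix.of fun x y => ∏ m, M m (x m) (y m)) * (Matrix.of fun x y => ∏ m, N m (x m) (y m))
      = Matrix.of (fun (x y : Fin n → Fin 2) => ∏ m, (M m * N m) (x m) (y m)) := by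
  ext x y
  have h : ∀ m : Fin n, (M m * N m) (x m) (y m)
      = ∑ a : Fin 2, M m (x m) a * N m a (y m) := fun m => Matrix.mul_apply
  simp only [Matrix.mul_apply, Matrix.of_apply, h]
  rw [Finset.prod_univ_sum]
  simp [Fintype.piFinset_univ, Finset.prod_mul_distrib]

lemma coupling_commute (n : ℕ) (P : Matrix (Fin 2) (Fin 2) ℂ) (i j k l : Fin n) :
    Commute (coupling n P i j) (coupling n P k l) := by
  have e : ∀ a b : Fin n, coupling n P a b
      = Matrix.of (fun x y => ∏ m, (if m = a ∨ m = b then P else (1 : Matrix (Fin 2) (Fin 2) ℂ)) (x m) (y m)) := fun a b => rfl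
  unfold Commute SemiconjBy
  rw [e, e, prodMat_mul, prodMat_mul]
  congr 1
  ext x y
  refine Finset.prod_congr rfl fun m _ => ?_
  split_ifs <;> simp [mul_comm]

attribute [local instance] Matrix.linftyOpNormedRing Matrix.linftyOpNormedAlgebra

/-- **Two-qubit rotation gates built from the same Pauli commute.** -/
theorem rotGate_mul_comm
    (P : Matrix (Fin 2) (Fin 2) ℂ) (n : ℕ) (i j k l : Fin n)
    (hij : i ≠ j) (hkl : k ≠ l) (θ φ : ℝ) :
    rotGate n P i j θ * rotGate n P k l φ = rotGate n P k l φ * rotGate n P i j θ := by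
  have h : Commute ((-(Complex.I * θ / 2)) • coupling n P i j)
      ((-(Complex.I * φ / 2)) • coupling n P k l) :=
    ((coupling_commute n P i j k l).smul_left _).smul_right _
  exact h.exp
end
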